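/- Let X be an infinite set, G a group with Alt(X) ≤ G ≤ Sym(X), and U ≤ G a subgroup of finite index. Then Alt(X) ≤ U. -/

import Mathlib

/-- The group of finitary permutations of `X`: those with finite support. -/
def FSym (X : Type*) : Subgroup (Equiv.Perm X) where
  carrier := {g | {x | g x ≠ x}.Finite}
  one_mem' := by simp
  mul_mem' := by
    intro a b ha hb
    refine (Set.Finite.union ha hb).subset fun x hx => ?_
    simp only [Set.mem_setOf_eq, Set.mem_union, Equiv.Perm.mul_apply] at hx ⊢
    by_cases h : b x = x
    · left; rwa [h] at hx
    · right; exact h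
  inv_mem' := by
    intro a ha
    refine ha.subset fun x hx => ?_
    simp only [Set.mem_setOf_eq] at hx ⊢
    intro h
    exact hx (Equiv.Perm.inv_eq_iff_eq.mpr h.symm)

/-- A permutation is even (finitary) if it is a product of an even number of transpositions. -/
def IsEvenPerm {X : Type*} [DecidableEq X] (g : Equiv.Perm X) : Prop :=
  ∃ l : List (Equiv.Perm X), (∀ τ ∈ l, τ.IsSwap) ∧ Even l.length ∧ g = l.prod

/-- A permutation is odd (finitary) if it is a product of an odd number of transpositions. -/
def IsOddPerm {X : Type*} [DecidableEq X] (g : Equiv.Perm X) : Prop :=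
  ∃ l : List (Equiv.Perm X), (∀ τ ∈ l, τ.IsSwap) ∧ Odd l.length ∧ g = l.prod

/-- `Alt(X)`: the group of even finitary permutations of `X`. -/
def AltGroup (X : Type*) [DecidableEq X] : Subgroup (Equiv.Perm X) where
  carrier := {g | IsEvenPerm g}
  one_mem' := ⟨[], by simp, by simp, by simp⟩
  mul_mem' := by
    rintro a b ⟨l₁, hs₁, he₁, hp₁⟩ ⟨l₂, hs₂, he₂, hp₂⟩
    refine ⟨l₁ ++ l₂, ?_, by simpa using he₁.add he₂, by rw [hp₁, hp₂, List.prod_append]⟩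
    intro τ hτ
    rcases List.mem_append.mp hτ with h | h
    exacts [hs₁ τ h, hs₂ τ h]
  inv_mem' := by
    rintro a ⟨l, hs, he, hp⟩
    refine ⟨(l.map fun x => x⁻¹).reverse, ?_, by simpa using he, ?_⟩
    · intro τ hτ
      simp only [List.mem_reverse, List.mem_map] at hτ
      obtain ⟨σ, hσ, rfl⟩ := hτ
      obtain ⟨x, y, hxy, rfl⟩ := hs σ hσ
      exact ⟨x, y, hxy, by simp⟩
    · rw [hp, List.prod_inv_reverse]

/-- The 3-cycle `a ↦ b ↦ c ↦ a`. -/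
def cyc3 {X : Type*} [DecidableEq X] (a b c : X) : Equiv.Perm X :=
  Equiv.swap a b * Equiv.swap b c

theorem cyc3_conj {X : Type*} [DecidableEq X] (π : Equiv.Perm X) (a b c : X) :
    π * cyc3 a b c * π⁻¹ = cyc3 (π a) (π b) (π c) := by
  unfold cyc3
  rw [show π * (Equiv.swap a b * Equiv.swap b c) * π⁻¹
      = (π * Equiv.swap a b * π⁻¹) * (π * Equiv.swap b c * π⁻¹) by group,
    ← Equiv.swap_apply_apply, ← Equiv.swap_apply_apply]

theorem cyc3_key {X : Type*} [DecidableEq X] {a b c : X}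
    (hab : a ≠ b) (hac : a ≠ c) (hbc : b ≠ c) :
    (cyc3 a b c)⁻¹ * cyc3 a c b = cyc3 a b c := by
  unfold cyc3
  ext x
  simp only [mul_inv_rev, Equiv.swap_inv, Equiv.Perm.mul_apply]
  rcases eq_or_ne x a with rfl | hxa
  · simp [Equiv.swap_apply_of_ne_of_ne, hab, hac, hbc, hab.symm, hac.symm, hbc.symm]
  rcases eq_or_ne x b with rfl | hxb
  · simp [Equiv.swap_apply_of_ne_of_ne, hab, hac, hbc, hab.symm, hac.symm, hbc.symm]
  rcases eq_or_ne x c with rfl | hxc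
  · simp [Equiv.swap_apply_of_ne_of_ne, hab, hac, hbc, hab.symm, hac.symm, hbc.symm]
  · simp [Equiv.swap_apply_of_ne_of_ne, hxa, hxb, hxc]

theorem cyc3_mem_alt {X : Type*} [DecidableEq X] {a b c : X}
    (hab : a ≠ b) (hbc : b ≠ c) : cyc3 a b c ∈ AltGroup X := by
  refine ⟨[Equiv.swap a b, Equiv.swap b c], ?_, by simp, by simp [cyc3]⟩
  intro τ hτ
  simp only [List.mem_cons, List.not_mem_nil, or_false] at hτ
  rcases hτ with rfl | rfl
  exacts [⟨a, b, hab, rfl⟩, ⟨b, c, hbc, rfl⟩]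

theorem swap4_mem_alt {X : Type*} [DecidableEq X] {a b c d e e' g h : X}
    (h1 : a ≠ b) (h2 : c ≠ d) (h3 : e ≠ e') (h4 : g ≠ h) :
    Equiv.swap a b * (Equiv.swap c d * (Equiv.swap e e' * Equiv.swap g h)) ∈ AltGroup X := by
  refine ⟨[Equiv.swap a b, Equiv.swap c d, Equiv.swap e e', Equiv.swap g h], ?_, by simp only [List.length]; decide, by simp⟩
  intro τ hτ
  simp only [List.mem_cons, List.not_mem_nil, or_false] at hτ
  rcases hτ with rfl | rfl | rfl | rfl
  exacts [⟨a, b, h1, rfl⟩, ⟨c, d, h2, rfl⟩, ⟨e, e', h3, rfl⟩, ⟨g, h, h4, rfl⟩]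

theorem pair_swap_mem {X : Type*} [DecidableEq X] (U : Subgroup (Equiv.Perm X))
    (hcyc : ∀ u v w : X, u ≠ v → u ≠ w → v ≠ w → cyc3 u v w ∈ U) :
    ∀ τ₁ τ₂ : Equiv.Perm X, τ₁.IsSwap → τ₂.IsSwap → τ₁ * τ₂ ∈ U := by
  rintro τ₁ τ₂ ⟨a, b, hab, rfl⟩ ⟨c, d, hcd, rfl⟩
  by_cases hac : a = c
  · subst hac
    by_cases hbd : b = d
    · subst hbd; rw [Equiv.swap_mul_self]; exact one_mem U
    · rw [show Equiv.swap a b * Equiv.swap a d = cyc3 b a d by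
        rw [cyc3, Equiv.swap_comm b a]]
      exact hcyc b a d hab.symm hbd hcd
  · by_cases had : a = d
    · subst had
      by_cases hbc : b = c
      · subst hbc
        rw [Equiv.swap_comm b a, Equiv.swap_mul_self]; exact one_mem U
      · rw [show Equiv.swap a b * Equiv.swap c a = cyc3 b a c by
          rw [cyc3, Equiv.swap_comm b a, Equiv.swap_comm c a]]
        exact hcyc b a c hab.symm hbc hac
    · by_cases hbc : b = c
      · subst hbc
        rw [show Equiv.swap a b * Equiv.swap b d = cyc3 a b d from rfl]
        exact hcyc a b d hab had hcd
      · by_cases hbd : b = d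
        · subst hbd
          rw [show Equiv.swap a b * Equiv.swap c b = cyc3 a b c by
            rw [cyc3, Equiv.swap_comm c b]]
          exact hcyc a b c hab hac hbc
        · rw [show Equiv.swap a b * Equiv.swap c d = cyc3 a b c * cyc3 b c d by
            rw [cyc3, cyc3, mul_assoc, ← mul_assoc (Equiv.swap b c), Equiv.swap_mul_self, one_mul]]
          exact mul_mem (hcyc a b c hab hac hbc) (hcyc b c d hbc hbd hcd)

theorem prod_swaps_mem {X : Type*} [DecidableEq X] (U : Subgroup (Equiv.Perm X))
    (hp : ∀ τ₁ τ₂ : Equiv.Perm X, τ₁.IsSwap → τ₂.IsSwap → τ₁ * τ₂ ∈ U) :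
    ∀ l : List (Equiv.Perm X), (∀ τ ∈ l, τ.IsSwap) → Even l.length → l.prod ∈ U
  | [], _, _ => one_mem U
  | [τ], _, he => by simp at he
  | τ₁ :: τ₂ :: t, hs, he => by
    rw [List.prod_cons, List.prod_cons, ← mul_assoc]
    refine mul_mem (hp τ₁ τ₂ (hs _ (by simp)) (hs _ (by simp)))
      (prod_swaps_mem U hp t (fun τ hτ => hs τ (by simp [hτ])) ?_)
    obtain ⟨k, hk⟩ := he
    exact ⟨k - 1, by simp at hk; omega⟩

/-- Let `X` be an infinite set, `G` a group with `Alt(X) ≤ G ≤ Sym(X)`, and `U ≤ G` a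
subgroup of finite index. Then `Alt(X) ≤ U`. -/
theorem alt_le_of_finiteIndex (X : Type*) [Infinite X] [DecidableEq X]
    (G : Subgroup (Equiv.Perm X)) (hG : AltGroup X ≤ G)
    (U : Subgroup (Equiv.Perm X)) (hUG : U ≤ G) (hU : U.relIndex G ≠ 0) :
    AltGroup X ≤ U := by
  classical
  haveI hFI : (U.subgroupOf G).FiniteIndex := ⟨hU⟩
  set K : Subgroup G := (U.subgroupOf G).normalCore with hKdef
  haveI : K.FiniteIndex := Subgroup.finiteIndex_normalCore _
  haveI : K.Normal := Subgroup.normalCore_normal _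
  haveI : Finite (G ⧸ K) := Subgroup.finite_quotient_of_finiteIndex
  -- the predicate "lies in (the image in Sym X of) K"
  let P : Equiv.Perm X → Prop := fun g => ∃ h : g ∈ G, (⟨g, h⟩ : G) ∈ K
  have hPU : ∀ g, P g → g ∈ U := by
    rintro g ⟨hg, hk⟩
    have := Subgroup.normalCore_le (U.subgroupOf G) hk
    rwa [Subgroup.mem_subgroupOf] at this
  have hPmul : ∀ g₁ g₂, P g₁ → P g₂ → P (g₁ * g₂) := by
    rintro g₁ g₂ ⟨h₁, k₁⟩ ⟨h₂, k₂⟩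
    exact ⟨mul_mem h₁ h₂, mul_mem k₁ k₂⟩
  have hPconj : ∀ π, π ∈ AltGroup X → ∀ k, P k → P (π * k * π⁻¹) := by
    rintro π hπ k ⟨hk, hkK⟩
    have hπG : π ∈ G := hG hπ
    exact ⟨mul_mem (mul_mem hπG hk) (inv_mem hπG),
      ‹K.Normal›.conj_mem ⟨k, hk⟩ hkK ⟨π, hπG⟩⟩
  -- infinitely many disjoint 3-cycles
  let f : ℕ ↪ X := Infinite.natEmbedding X
  have hfne : ∀ {m n : ℕ}, m ≠ n → f m ≠ f n := fun h e => h (f.injective e)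
  let c : ℕ → Equiv.Perm X := fun i => cyc3 (f (3*i)) (f (3*i+1)) (f (3*i+2))
  have hcAlt : ∀ i, c i ∈ AltGroup X := fun i =>
    cyc3_mem_alt (hfne (by omega)) (hfne (by omega))
  have hcG : ∀ i, c i ∈ G := fun i => hG (hcAlt i)
  -- pigeonhole
  obtain ⟨i, j, hij, hcij⟩ := Finite.exists_ne_map_eq_of_infinite
    (fun i : ℕ => (QuotientGroup.mk (⟨c i, hcG i⟩ : G) : G ⧸ K))
  have hA : P ((c i)⁻¹ * c j) :=
    ⟨mul_mem (inv_mem (hcG i)) (hcG j), QuotientGroup.eq.mp hcij⟩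
  -- names for the points of the two triples
  set a := f (3*i) with ha
  set p := f (3*i+1) with hpd
  set r := f (3*i+2) with hrd
  set b := f (3*j) with hb
  set q := f (3*j+1) with hq
  set s := f (3*j+2) with hs
  have hap : a ≠ p := hfne (by omega)
  have har : a ≠ r := hfne (by omega)
  have hab : a ≠ b := hfne (by omega)
  have haq : a ≠ q := hfne (by omega)
  have has : a ≠ s := hfne (by omega)
  have hpr : p ≠ r := hfne (by omega)
  have hpb : p ≠ b := hfne (by omega)
  have hpq : p ≠ q := hfne (by omega)
  have hps : p ≠ s := hfne (by omega)
  have hrb : r ≠ b := hfne (by omega)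
  have hrq : r ≠ q := hfne (by omega)
  have hrs : r ≠ s := hfne (by omega)
  have hbq : b ≠ q := hfne (by omega)
  have hbs : b ≠ s := hfne (by omega)
  have hqs : q ≠ s := hfne (by omega)
  have hci : c i = cyc3 a p r := rfl
  have hcj : c j = cyc3 b q s := rfl
  -- the conjugator π
  set π : Equiv.Perm X := Equiv.swap a b * (Equiv.swap p q * (Equiv.swap q r * Equiv.swap r s))
    with hπdef
  have hπAlt : π ∈ AltGroup X := swap4_mem_alt hab hpq hrq.symm hrs
  have hπa : π a = b := by
    simp [hπdef, Equiv.Perm.mul_apply, Equiv.swap_apply_def, hap, har, hab, haq, has,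
      hpr, hpb, hpq, hps, hrb, hrq, hrs, hbq, hbs, hqs,
      hap.symm, har.symm, hab.symm, haq.symm, has.symm, hpr.symm, hpb.symm, hpq.symm,
      hps.symm, hrb.symm, hrq.symm, hrs.symm, hbq.symm, hbs.symm, hqs.symm]
  have hπp : π p = q := by
    simp [hπdef, Equiv.Perm.mul_apply, Equiv.swap_apply_def, hap, har, hab, haq, has,
      hpr, hpb, hpq, hps, hrb, hrq, hrs, hbq, hbs, hqs,
      hap.symm, har.symm, hab.symm, haq.symm, has.symm, hpr.symm, hpb.symm, hpq.symm,
      hps.symm, hrb.symm, hrq.symm, hrs.symm, hbq.symm, hbs.symm, hqs.symm]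
  have hπr : π r = s := by
    simp [hπdef, Equiv.Perm.mul_apply, Equiv.swap_apply_def, hap, har, hab, haq, has,
      hpr, hpb, hpq, hps, hrb, hrq, hrs, hbq, hbs, hqs,
      hap.symm, har.symm, hab.symm, haq.symm, has.symm, hpr.symm, hpb.symm, hpq.symm,
      hps.symm, hrb.symm, hrq.symm, hrs.symm, hbq.symm, hbs.symm, hqs.symm]
  have hπb : π b = a := by
    simp [hπdef, Equiv.Perm.mul_apply, Equiv.swap_apply_def, hap, har, hab, haq, has,
      hpr, hpb, hpq, hps, hrb, hrq, hrs, hbq, hbs, hqs,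
      hap.symm, har.symm, hab.symm, haq.symm, has.symm, hpr.symm, hpb.symm, hpq.symm,
      hps.symm, hrb.symm, hrq.symm, hrs.symm, hbq.symm, hbs.symm, hqs.symm]
  have hπq : π q = r := by
    simp [hπdef, Equiv.Perm.mul_apply, Equiv.swap_apply_def, hap, har, hab, haq, has,
      hpr, hpb, hpq, hps, hrb, hrq, hrs, hbq, hbs, hqs,
      hap.symm, har.symm, hab.symm, haq.symm, has.symm, hpr.symm, hpb.symm, hpq.symm,
      hps.symm, hrb.symm, hrq.symm, hrs.symm, hbq.symm, hbs.symm, hqs.symm]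
  have hπs : π s = p := by
    simp [hπdef, Equiv.Perm.mul_apply, Equiv.swap_apply_def, hap, har, hab, haq, has,
      hpr, hpb, hpq, hps, hrb, hrq, hrs, hbq, hbs, hqs,
      hap.symm, har.symm, hab.symm, haq.symm, has.symm, hpr.symm, hpb.symm, hpq.symm,
      hps.symm, hrb.symm, hrq.symm, hrs.symm, hbq.symm, hbs.symm, hqs.symm]
  -- a 3-cycle lies in K
  have hP3 : P (cyc3 a p r) := by
    have h1 : P (π * ((c i)⁻¹ * c j) * π⁻¹) := hPconj π hπAlt _ hA
    have h2 : P (((c i)⁻¹ * c j) * (π * ((c i)⁻¹ * c j) * π⁻¹)) := hPmul _ _ hA h1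
    have e : π * ((c i)⁻¹ * c j) * π⁻¹ = (cyc3 b q s)⁻¹ * cyc3 a r p := by
      rw [hci, hcj,
        show π * ((cyc3 a p r)⁻¹ * cyc3 b q s) * π⁻¹
          = (π * cyc3 a p r * π⁻¹)⁻¹ * (π * cyc3 b q s * π⁻¹) by group,
        cyc3_conj, cyc3_conj, hπa, hπp, hπr, hπb, hπq, hπs]
    rw [e, hci, hcj,
      show ((cyc3 a p r)⁻¹ * cyc3 b q s) * ((cyc3 b q s)⁻¹ * cyc3 a r p)
        = (cyc3 a p r)⁻¹ * cyc3 a r p by group,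
      cyc3_key hap har hpr] at h2
    exact h2
  -- all 3-cycles lie in K
  have hall : ∀ u v w : X, u ≠ v → u ≠ w → v ≠ w → P (cyc3 u v w) := by
    intro u v w huv huw hvw
    have hSfin : (f ⁻¹' ({u, v, w} : Set X)).Finite :=
      Set.Finite.preimage (f.injective.injOn) (Set.toFinite _)
    obtain ⟨N, hNb⟩ := hSfin.bddAbove
    have hfr : ∀ k, N < k → f k ≠ u ∧ f k ≠ v ∧ f k ≠ w := by
      intro k hk
      refine ⟨?_, ?_, ?_⟩ <;>
        · intro e
          have hmem : k ∈ f ⁻¹' ({u, v, w} : Set X) := by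
            simp [Set.mem_preimage, e]
          exact absurd (hNb hmem) (by omega)
    set m := max (i + 1) (N + 1) with hm
    set n := m + 1 with hn
    have hmi : i + 1 ≤ m := le_max_left _ _
    have hmN : N + 1 ≤ m := le_max_right _ _
    set a' := f (3*m) with ha'
    set p' := f (3*m+1) with hp'
    set r' := f (3*m+2) with hr'
    set z := f (3*n) with hz
    set z' := f (3*n+1) with hz'
    -- freshness of the primed points w.r.t. u, v, w
    have hfa' : a' ≠ u ∧ a' ≠ v ∧ a' ≠ w := hfr (3*m) (by omega)
    have hfp' : p' ≠ u ∧ p' ≠ v ∧ p' ≠ w := hfr (3*m+1) (by omega)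
    have hfr' : r' ≠ u ∧ r' ≠ v ∧ r' ≠ w := hfr (3*m+2) (by omega)
    -- distinctness
    have h1 : a' ≠ p' := hfne (by omega)
    have h2 : a' ≠ r' := hfne (by omega)
    have h3 : p' ≠ r' := hfne (by omega)
    have h4 : z ≠ z' := hfne (by omega)
    have haa' : a ≠ a' := hfne (by omega)
    have hap' : a ≠ p' := hfne (by omega)
    have har' : a ≠ r' := hfne (by omega)
    have haz : a ≠ z := hfne (by omega)
    have haz' : a ≠ z' := hfne (by omega)
    have hpa' : p ≠ a' := hfne (by omega)
    have hpp' : p ≠ p' := hfne (by omega)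
    have hpr' : p ≠ r' := hfne (by omega)
    have hpz : p ≠ z := hfne (by omega)
    have hpz' : p ≠ z' := hfne (by omega)
    have hra' : r ≠ a' := hfne (by omega)
    have hrp' : r ≠ p' := hfne (by omega)
    have hrr' : r ≠ r' := hfne (by omega)
    have hrz : r ≠ z := hfne (by omega)
    have hrz' : r ≠ z' := hfne (by omega)
    have ha'z : a' ≠ z := hfne (by omega)
    have ha'z' : a' ≠ z' := hfne (by omega)
    have hp'z : p' ≠ z := hfne (by omega)
    have hp'z' : p' ≠ z' := hfne (by omega)
    have hr'z : r' ≠ z := hfne (by omega)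
    have hr'z' : r' ≠ z' := hfne (by omega)
    -- step 1: conjugate cyc3 a p r to cyc3 a' p' r'
    set ρ₁ : Equiv.Perm X :=
      Equiv.swap a a' * (Equiv.swap p p' * (Equiv.swap r r' * Equiv.swap z z')) with hρ₁
    have hρ₁Alt : ρ₁ ∈ AltGroup X := swap4_mem_alt haa' hpp' hrr' h4
    have hρ₁a : ρ₁ a = a' := by
      simp [hρ₁, Equiv.Perm.mul_apply, Equiv.swap_apply_def, hap, har, hpr,
        haa', hap', har', haz, haz', hpa', hpp', hpr', hpz, hpz',
        hra', hrp', hrr', hrz, hrz', h1, h2, h3, h4,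
        hap.symm, har.symm, hpr.symm, haa'.symm, hap'.symm, har'.symm, haz.symm, haz'.symm,
        hpa'.symm, hpp'.symm, hpr'.symm, hpz.symm, hpz'.symm, hra'.symm, hrp'.symm,
        hrr'.symm, hrz.symm, hrz'.symm, h1.symm, h2.symm, h3.symm, h4.symm,
        ha'z, ha'z', hp'z, hp'z', hr'z, hr'z',
        ha'z.symm, ha'z'.symm, hp'z.symm, hp'z'.symm, hr'z.symm, hr'z'.symm]
    have hρ₁p : ρ₁ p = p' := by
      simp [hρ₁, Equiv.Perm.mul_apply, Equiv.swap_apply_def, hap, har, hpr,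
        haa', hap', har', haz, haz', hpa', hpp', hpr', hpz, hpz',
        hra', hrp', hrr', hrz, hrz', h1, h2, h3, h4,
        hap.symm, har.symm, hpr.symm, haa'.symm, hap'.symm, har'.symm, haz.symm, haz'.symm,
        hpa'.symm, hpp'.symm, hpr'.symm, hpz.symm, hpz'.symm, hra'.symm, hrp'.symm,
        hrr'.symm, hrz.symm, hrz'.symm, h1.symm, h2.symm, h3.symm, h4.symm,
        ha'z, ha'z', hp'z, hp'z', hr'z, hr'z',
        ha'z.symm, ha'z'.symm, hp'z.symm, hp'z'.symm, hr'z.symm, hr'z'.symm]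
    have hρ₁r : ρ₁ r = r' := by
      simp [hρ₁, Equiv.Perm.mul_apply, Equiv.swap_apply_def, hap, har, hpr,
        haa', hap', har', haz, haz', hpa', hpp', hpr', hpz, hpz',
        hra', hrp', hrr', hrz, hrz', h1, h2, h3, h4,
        hap.symm, har.symm, hpr.symm, haa'.symm, hap'.symm, har'.symm, haz.symm, haz'.symm,
        hpa'.symm, hpp'.symm, hpr'.symm, hpz.symm, hpz'.symm, hra'.symm, hrp'.symm,
        hrr'.symm, hrz.symm, hrz'.symm, h1.symm, h2.symm, h3.symm, h4.symm,
        ha'z, ha'z', hp'z, hp'z', hr'z, hr'z',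
        ha'z.symm, ha'z'.symm, hp'z.symm, hp'z'.symm, hr'z.symm, hr'z'.symm]
    have hP3' : P (cyc3 a' p' r') := by
      have := hPconj ρ₁ hρ₁Alt _ hP3
      rwa [cyc3_conj, hρ₁a, hρ₁p, hρ₁r] at this
    -- step 2: conjugate cyc3 a' p' r' to cyc3 u v w
    set ρ₂ : Equiv.Perm X :=
      Equiv.swap a' u * (Equiv.swap p' v * (Equiv.swap r' w * Equiv.swap z z')) with hρ₂
    have hρ₂Alt : ρ₂ ∈ AltGroup X := swap4_mem_alt hfa'.1 hfp'.2.1 hfr'.2.2 h4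
    have hρ₂a : ρ₂ a' = u := by
      simp [hρ₂, Equiv.Perm.mul_apply, Equiv.swap_apply_def, h1, h2, h3, h4,
        h1.symm, h2.symm, h3.symm, h4.symm, huv, huw, hvw, huv.symm, huw.symm, hvw.symm,
        hfa'.1, hfa'.2.1, hfa'.2.2, hfp'.1, hfp'.2.1, hfp'.2.2, hfr'.1, hfr'.2.1, hfr'.2.2,
        (hfa'.1).symm, (hfa'.2.1).symm, (hfa'.2.2).symm, (hfp'.1).symm, (hfp'.2.1).symm,
        (hfp'.2.2).symm, (hfr'.1).symm, (hfr'.2.1).symm, (hfr'.2.2).symm,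
        ha'z, ha'z', hp'z, hp'z', hr'z, hr'z',
        ha'z.symm, ha'z'.symm, hp'z.symm, hp'z'.symm, hr'z.symm, hr'z'.symm]
    have hρ₂p : ρ₂ p' = v := by
      simp [hρ₂, Equiv.Perm.mul_apply, Equiv.swap_apply_def, h1, h2, h3, h4,
        h1.symm, h2.symm, h3.symm, h4.symm, huv, huw, hvw, huv.symm, huw.symm, hvw.symm,
        hfa'.1, hfa'.2.1, hfa'.2.2, hfp'.1, hfp'.2.1, hfp'.2.2, hfr'.1, hfr'.2.1, hfr'.2.2,
        (hfa'.1).symm, (hfa'.2.1).symm, (hfa'.2.2).symm, (hfp'.1).symm, (hfp'.2.1).symm,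
        (hfp'.2.2).symm, (hfr'.1).symm, (hfr'.2.1).symm, (hfr'.2.2).symm,
        ha'z, ha'z', hp'z, hp'z', hr'z, hr'z',
        ha'z.symm, ha'z'.symm, hp'z.symm, hp'z'.symm, hr'z.symm, hr'z'.symm]
    have hρ₂r : ρ₂ r' = w := by
      simp [hρ₂, Equiv.Perm.mul_apply, Equiv.swap_apply_def, h1, h2, h3, h4,
        h1.symm, h2.symm, h3.symm, h4.symm, huv, huw, hvw, huv.symm, huw.symm, hvw.symm,
        hfa'.1, hfa'.2.1, hfa'.2.2, hfp'.1, hfp'.2.1, hfp'.2.2, hfr'.1, hfr'.2.1, hfr'.2.2,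
        (hfa'.1).symm, (hfa'.2.1).symm, (hfa'.2.2).symm, (hfp'.1).symm, (hfp'.2.1).symm,
        (hfp'.2.2).symm, (hfr'.1).symm, (hfr'.2.1).symm, (hfr'.2.2).symm,
        ha'z, ha'z', hp'z, hp'z', hr'z, hr'z',
        ha'z.symm, ha'z'.symm, hp'z.symm, hp'z'.symm, hr'z.symm, hr'z'.symm]
    have := hPconj ρ₂ hρ₂Alt _ hP3'
    rwa [cyc3_conj, hρ₂a, hρ₂p, hρ₂r] at this
  -- conclude
  have hcycU : ∀ u v w : X, u ≠ v → u ≠ w → v ≠ w → cyc3 u v w ∈ U :=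
    fun u v w huv huw hvw => hPU _ (hall u v w huv huw hvw)
  rintro g ⟨l, hsw, he, rfl⟩
  exact prod_swaps_mem U (pair_swap_mem U hcycU) l hsw he
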